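/- (Kato's transformation function / exact spectral flow.) Let P : ℝ → Matrix n n ℂ be differentiable with derivative P', and suppose that for every s ∈ ℝ the matrix P(s) is hermitian and idempotent (P(s)·P(s) = P(s)). Let U : ℝ → Matrix n n ℂ satisfy U(0) = 1 and, for every s, HasDerivAt U ((P'(s)·P(s) − P(s)·P'(s))·U(s)) s. Then for every s ∈ ℝ the matrix U(s) is unitary (U(s)* · U(s) = 1 = U(s) · U(s)*) and P(s) · U(s) = U(s) · P(0); in particular P(s) = U(s) · P(0) · U(s)*. -/

import Mathlib

open scoped Matrix.Norms.L2Operator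
open Matrix

/-- Kato's transformation function (exact spectral flow): if `P(s)` is a differentiable path of
hermitian idempotents and `U` solves `U' = (P' P - P P') U`, `U(0) = 1`, then each `U(s)` is
unitary and intertwines the projections: `P(s) U(s) = U(s) P(0)`, hence
`P(s) = U(s) P(0) U(s)*`. -/
theorem kato_transformation_function
    {n : Type*} [Fintype n] [DecidableEq n]
    (P P' U : ℝ → Matrix n n ℂ)
    (hP : ∀ s, HasDerivAt P (P' s) s)
    (hherm : ∀ s, (P s).IsHermitian)
    (hidem : ∀ s, P s * P s = P s)
    (hU0 : U 0 = 1)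
    (hU : ∀ s, HasDerivAt U ((P' s * P s - P s * P' s) * U s) s) :
    ∀ s, ((U s)ᴴ * U s = 1 ∧ U s * (U s)ᴴ = 1) ∧
      P s * U s = U s * P 0 ∧ P s = U s * P 0 * (U s)ᴴ := by
  set A : ℝ → Matrix n n ℂ := fun s => P' s * P s - P s * P' s with hA
  -- derivative of hermitian path is hermitian
  have hP'herm : ∀ s, (P' s)ᴴ = P' s := by
    intro s
    have h1 : HasDerivAt (fun t => star (P t)) (star (P' s)) s := (hP s).star
    have h2 : (fun t => star (P t)) = P := by
      funext t
      rw [Matrix.star_eq_conjTranspose, (hherm t).eq]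
    rw [h2] at h1
    have := h1.unique (hP s)
    rwa [Matrix.star_eq_conjTranspose] at this
  -- Leibniz for P^2 = P
  have hLeib : ∀ s, P' s * P s + P s * P' s = P' s := by
    intro s
    have h1 : HasDerivAt (fun t => P t * P t) (P' s * P s + P s * P' s) s :=
      (hP s).mul (hP s)
    have h2 : (fun t => P t * P t) = P := funext hidem
    rw [h2] at h1
    exact h1.unique (hP s)
  have hPP'P : ∀ s, P s * P' s * P s = 0 := by
    intro s
    have h1 : P s * P' s = P s * P' s * P s + (P s * P s) * P' s := by
      conv_lhs => rw [← hLeib s]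
      noncomm_ring
    rw [hidem s] at h1
    linear_combination (norm := noncomm_ring) -h1
  have hAstar : ∀ s, star (A s) = -(A s) := by
    intro s
    simp only [hA, Matrix.star_eq_conjTranspose, Matrix.conjTranspose_sub,
      Matrix.conjTranspose_mul, (hherm s).eq, hP'herm s]
    exact (neg_sub _ _).symm
  -- U*U is constant
  have hUU : ∀ s, star (U s) * U s = 1 := by
    have hdiff : ∀ s, HasDerivAt (fun t => star (U t) * U t) 0 s := by
      intro s
      have h : HasDerivAt (fun t => star (U t) * U t)
          (star (A s * U s) * U s + star (U s) * (A s * U s)) s := (hU s).star.mul (hU s)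
      have e : star (A s * U s) * U s + star (U s) * (A s * U s) = 0 := by
        rw [StarMul.star_mul, hAstar s]
        noncomm_ring
      rwa [e] at h
    have hconst : ∀ s, star (U s) * U s = star (U 0) * U 0 := by
      intro s
      have : (fun t => star (U t) * U t) = fun _ => star (U 0) * U 0 := by
        have hd : Differentiable ℝ (fun t => star (U t) * U t) :=
          fun t => (hdiff t).differentiableAt
        funext t
        exact is_const_of_deriv_eq_zero hd (fun x => (hdiff x).deriv) t 0
      exact congrFun this s
    intro s
    rw [hconst s, hU0]
    simp
  have hUU' : ∀ s, U s * star (U s) = 1 := fun s => mul_eq_one_comm.mp (hUU s)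
  -- intertwining: star U * P * U constant
  have hW : ∀ s, star (U s) * P s * U s = P 0 := by
    have hAP : ∀ s, A s * P s - P s * A s = P' s := by
      intro s
      simp only [hA]
      have h1 := hidem s
      have h2 := hLeib s
      have h3 := hPP'P s
      have expand : (P' s * P s - P s * P' s) * P s - P s * (P' s * P s - P s * P' s)
          = P' s * (P s * P s) + (P s * P s) * P' s - 2 * (P s * P' s * P s) := by
        noncomm_ring
      rw [expand, h1, h3, mul_zero, sub_zero, h2]
    have hdiff : ∀ s, HasDerivAt (fun t => star (U t) * P t * U t) 0 s := by
      intro s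
      have h : HasDerivAt (fun t => star (U t) * P t * U t)
          ((star (A s * U s) * P s + star (U s) * P' s) * U s
            + star (U s) * P s * (A s * U s)) s := ((hU s).star.mul (hP s)).mul (hU s)
      have e : (star (A s * U s) * P s + star (U s) * P' s) * U s
          + star (U s) * P s * (A s * U s) = 0 := by
        rw [StarMul.star_mul, hAstar s, ← hAP s]
        noncomm_ring
      rwa [e] at h
    have hconst : ∀ s, star (U s) * P s * U s = star (U 0) * P 0 * U 0 := by
      intro s
      have hd : Differentiable ℝ (fun t => star (U t) * P t * U t) :=
        fun t => (hdiff t).differentiableAt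
      exact congrFun (funext fun t =>
        is_const_of_deriv_eq_zero hd (fun x => (hdiff x).deriv) t 0) s
    intro s
    rw [hconst s, hU0]
    simp
  intro s
  have hPU : P s * U s = U s * P 0 := by
    have := congrArg (fun M => U s * M) (hW s)
    simpa [← mul_assoc, hUU' s] using this
  refine ⟨⟨?_, ?_⟩, hPU, ?_⟩
  · simpa [Matrix.star_eq_conjTranspose] using hUU s
  · simpa [Matrix.star_eq_conjTranspose] using hUU' s
  · have := congrArg (fun M => M * star (U s)) hPU
    simp only [mul_assoc, hUU' s, mul_one] at this
    rw [Matrix.star_eq_conjTranspose] at this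
    rw [this, mul_assoc]
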